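/- Let p be an odd prime and k an algebraically closed field of characteristic p. Let f ∈ k[x] with f(x) = x³ + a₂x² + a₁x + a₀ and p = 3. Suppose there exist Q ∈ k[t] with deg Q = 2 and λ(x,y) ∈ k[x,y] such that (x-y)²·(f(x)-f(y))/(x-y) = Q(λ(x,y)). Writing λ = λ₂ + λ₁ + λ₀ in homogeneous components, then λ₁ = 0. -/

import Mathlib

set_option maxHeartbeats 1000000

section Aux
open MvPolynomial

lemma deg2 (m : Fin 2 →₀ ℕ) : m.degree = m 0 + m 1 := by
  rw [Finsupp.degree_apply, Finset.sum_subset (Finset.subset_univ _) (by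
    intro i _ hi; exact Finsupp.notMem_support_iff.mp hi)]
  exact Fin.sum_univ_two m

lemma rep2 (m : Fin 2 →₀ ℕ) : m = Finsupp.single 0 (m 0) + Finsupp.single 1 (m 1) := by
  ext i
  fin_cases i <;> simp [Finsupp.single_apply]

lemma single2_eq_iff (i j a b : ℕ) :
    (Finsupp.single (0 : Fin 2) i + Finsupp.single 1 j = Finsupp.single 0 a + Finsupp.single 1 b)
      ↔ (a = i ∧ b = j) := by
  constructor
  · intro h
    have h0 := congrFun (congrArg (fun f : Fin 2 →₀ ℕ => (f : Fin 2 → ℕ)) h) 0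
    have h1 := congrFun (congrArg (fun f : Fin 2 →₀ ℕ => (f : Fin 2 → ℕ)) h) 1
    simp [Finsupp.single_apply] at h0 h1
    exact ⟨h0.symm, h1.symm⟩
  · rintro ⟨rfl, rfl⟩; rfl

lemma coeff_term {k : Type*} [CommSemiring k] (c : k) (i j a b : ℕ) :
    MvPolynomial.coeff (Finsupp.single 0 a + Finsupp.single 1 b)
      (C c * X 0 ^ i * X 1 ^ j : MvPolynomial (Fin 2) k) = if a = i ∧ b = j then c else 0 := by
  have h : (C c * X 0 ^ i * X 1 ^ j : MvPolynomial (Fin 2) k)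
      = monomial (Finsupp.single 0 i + Finsupp.single 1 j) c := by
    rw [X_pow_eq_monomial, X_pow_eq_monomial, C_apply, monomial_mul, monomial_mul,
      zero_add, mul_one, mul_one]
  rw [h, coeff_monomial]
  simp [single2_eq_iff]

lemma sdeg (n0 n1 : ℕ) :
    ((Finsupp.single (0 : Fin 2) n0 + Finsupp.single 1 n1)).degree = n0 + n1 := by
  rw [deg2]; simp [Finsupp.single_apply]

lemma expand2 {k : Type*} [CommSemiring k] {p : MvPolynomial (Fin 2) k}
    (h : p.totalDegree ≤ 2) :
    p = C (coeff (Finsupp.single 0 0 + Finsupp.single 1 0) p) * X 0 ^ 0 * X 1 ^ 0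
      + C (coeff (Finsupp.single 0 1 + Finsupp.single 1 0) p) * X 0 ^ 1 * X 1 ^ 0
      + C (coeff (Finsupp.single 0 0 + Finsupp.single 1 1) p) * X 0 ^ 0 * X 1 ^ 1
      + C (coeff (Finsupp.single 0 2 + Finsupp.single 1 0) p) * X 0 ^ 2 * X 1 ^ 0
      + C (coeff (Finsupp.single 0 1 + Finsupp.single 1 1) p) * X 0 ^ 1 * X 1 ^ 1
      + C (coeff (Finsupp.single 0 0 + Finsupp.single 1 2) p) * X 0 ^ 0 * X 1 ^ 2 := by
  ext m
  rw [rep2 m]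
  generalize m 0 = n0
  generalize m 1 = n1
  simp only [coeff_add, coeff_term]
  by_cases hb : n0 + n1 ≤ 2
  · have hb0 : n0 ≤ 2 := le_trans (Nat.le_add_right _ _) hb
    have hb1 : n1 ≤ 2 := le_trans (Nat.le_add_left _ _) hb
    interval_cases n0 <;> interval_cases n1 <;> first | omega | simp
  · have h0 : coeff (Finsupp.single 0 n0 + Finsupp.single 1 n1) p = 0 := by
      apply coeff_eq_zero_of_totalDegree_lt
      show p.totalDegree < (Finsupp.single (0:Fin 2) n0 + Finsupp.single 1 n1).degree
      rw [sdeg]; omega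
    rw [h0]
    split_ifs <;> first | omega | simp

lemma Fdeg_add {σ : Type*} (u v : σ →₀ ℕ) : (u + v).degree = u.degree + v.degree := by
  simp only [Finsupp.degree_eq_weight_one, map_add]

lemma hc_mul {k : Type*} [CommSemiring k] {σ : Type*} {p q : MvPolynomial σ k} {a b : ℕ}
    (hp : p.totalDegree ≤ a) (hq : q.totalDegree ≤ b) :
    homogeneousComponent (a + b) (p * q)
      = homogeneousComponent a p * homogeneousComponent b q := by
  classical
  have hz1 : ∀ u : σ →₀ ℕ, a < u.degree → coeff u p = 0 := fun u hu =>
    coeff_eq_zero_of_totalDegree_lt (lt_of_le_of_lt hp hu)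
  have hz2 : ∀ u : σ →₀ ℕ, b < u.degree → coeff u q = 0 := fun u hu =>
    coeff_eq_zero_of_totalDegree_lt (lt_of_le_of_lt hq hu)
  ext m
  rw [coeff_homogeneousComponent, coeff_mul, coeff_mul]
  split_ifs with hm
  · refine Finset.sum_congr rfl fun x hx => ?_
    rw [Finset.HasAntidiagonal.mem_antidiagonal] at hx
    have hd : x.1.degree + x.2.degree = a + b := by rw [← Fdeg_add, hx, hm]
    rw [coeff_homogeneousComponent, coeff_homogeneousComponent]
    by_cases h1 : x.1.degree = a
    · have h2 : x.2.degree = b := by omega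
      simp [h1, h2]
    · rcases lt_or_gt_of_ne h1 with h | h
      · have : coeff x.2 q = 0 := hz2 _ (by omega)
        simp [this]
      · have : coeff x.1 p = 0 := hz1 _ h
        simp [this]
  · refine (Finset.sum_eq_zero fun x hx => ?_).symm
    rw [Finset.HasAntidiagonal.mem_antidiagonal] at hx
    rw [coeff_homogeneousComponent, coeff_homogeneousComponent]
    by_cases h1 : x.1.degree = a
    · have h2 : x.2.degree ≠ b := by
        intro h2
        apply hm
        rw [← hx, Fdeg_add, h1, h2]
      rw [if_neg h2, mul_zero]
    · rw [if_neg h1, zero_mul]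

lemma top_ne {k : Type*} [CommSemiring k] {σ : Type*} {p : MvPolynomial σ k} (hp : p ≠ 0) :
    homogeneousComponent p.totalDegree p ≠ 0 := by
  classical
  obtain ⟨m, hm, hdeg⟩ := p.support.exists_mem_eq_sup (support_nonempty.mpr hp)
    (fun s => s.sum fun _ e => e)
  intro h0
  have hc := coeff_homogeneousComponent (σ := σ) (R := k) p.totalDegree p m
  rw [h0] at hc
  have hmd : m.degree = p.totalDegree := by
    rw [MvPolynomial.totalDegree, hdeg]; rfl
  rw [if_pos hmd, coeff_zero] at hc
  exact (mem_support_iff.mp hm) hc.symm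

lemma sc {k : Type*} [Field k] (h3 : (3:k) = 0) {q1 q2 a₂ a₁ c00 c10 c01 c20 c11 c02 : k}
    (hq2 : q2 ≠ 0)
    (E40 : q2*c20^2 - 1 = 0) (E31 : 2*q2*c20*c11 + 1 = 0) (E13 : 2*q2*c11*c02 + 1 = 0)
    (E30 : 2*q2*c20*c10 - a₂ = 0) (E03 : 2*q2*c02*c01 - a₂ = 0)
    (E20 : q2*(c10^2 + 2*c20*c00) + q1*c20 - a₁ = 0)
    (E11 : q2*(2*c10*c01+2*c11*c00) + q1*c11 + 2*a₁ = 0) :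
    c10 = 0 ∧ c01 = 0 := by
  have h2 : (2:k) ≠ 0 := fun h => one_ne_zero (α := k) (by linear_combination h3 - h)
  have hc20 : c20 ≠ 0 := by
    intro h
    apply one_ne_zero (α := k)
    linear_combination -E40 + q2 * c20 * h
  have hnz : 2*q2*c20 ≠ 0 := mul_ne_zero (mul_ne_zero h2 hq2) hc20
  have h11 : c11 = c20 := by
    have key : 2*q2*c20*(c11 - c20) = 0 := by linear_combination E31 - 2*E40 - h3
    exact sub_eq_zero.mp ((mul_eq_zero.mp key).resolve_left hnz)
  have h02 : c02 = c20 := by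
    have key : 2*q2*c20*(c02 - c20) = 0 := by
      linear_combination E13 - 2*E40 - h3 - 2*q2*c02*h11
    exact sub_eq_zero.mp ((mul_eq_zero.mp key).resolve_left hnz)
  have h0110 : c01 = c10 := by
    have key : 2*q2*c20*(c01 - c10) = 0 := by
      linear_combination E03 - E30 - 2*q2*c01*h02
    exact sub_eq_zero.mp ((mul_eq_zero.mp key).resolve_left hnz)
  have key : q2 * c10^2 = 0 := by
    linear_combination E11 - E20 - a₁*h3 - q1*h11 - 2*q2*c00*h11 - 2*q2*c10*h0110
  have h10 : c10 = 0 := by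
    have := (mul_eq_zero.mp key).resolve_left hq2
    exact pow_eq_zero_iff (n := 2) (by norm_num) |>.mp this
  exact ⟨h10, h0110.trans h10⟩

lemma main_aux {k : Type*} [Field k] (h3 : (3:k) = 0) (q0 q1 q2 a₂ a₁ : k) (hq2 : q2 ≠ 0)
    (lam : MvPolynomial (Fin 2) k)
    (hmain : C q2 * lam^2 + C q1 * lam + C q0
      = (X 0 - X 1)^2 * (X 0^2 + X 0*X 1 + X 1^2 + C a₂*(X 0 + X 1) + C a₁)) :
    homogeneousComponent 1 lam = 0 := by
  classical
  -- degree bound on the right-hand side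
  have tdD2 : ((X 0 - X 1 : MvPolynomial (Fin 2) k)^2).totalDegree ≤ 2 := by
    refine (totalDegree_pow _ _).trans ?_
    have h : (X 0 - X 1 : MvPolynomial (Fin 2) k) = X 0 + C (-1 : k) * X 1 := by
      rw [map_neg, map_one]; ring
    have : (X 0 - X 1 : MvPolynomial (Fin 2) k).totalDegree ≤ 1 := by
      rw [h]
      refine (totalDegree_add _ _).trans (max_le (le_of_eq (totalDegree_X _)) ?_)
      refine (totalDegree_mul _ _).trans ?_
      simp
    omega
  have tdF : (X 0^2 + X 0*X 1 + X 1^2 + C a₂*(X 0 + X 1) + C a₁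
      : MvPolynomial (Fin 2) k).totalDegree ≤ 2 := by
    refine (totalDegree_add _ _).trans (max_le ?_ (by simp))
    refine (totalDegree_add _ _).trans (max_le ?_ ?_)
    · refine (totalDegree_add _ _).trans (max_le ?_ ?_)
      · refine (totalDegree_add _ _).trans (max_le ?_ ?_)
        · exact (totalDegree_pow _ _).trans (by simp)
        · exact (totalDegree_mul _ _).trans (by simp)
      · exact (totalDegree_pow _ _).trans (by simp)
    · refine (totalDegree_mul _ _).trans ?_
      have : (X 0 + X 1 : MvPolynomial (Fin 2) k).totalDegree ≤ 1 :=
        (totalDegree_add _ _).trans (by simp)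
      simp only [totalDegree_C, zero_add]
      omega
  have hR4 : ((X 0 - X 1 : MvPolynomial (Fin 2) k)^2
      * (X 0^2 + X 0*X 1 + X 1^2 + C a₂*(X 0 + X 1) + C a₁)).totalDegree ≤ 4 :=
    (totalDegree_mul _ _).trans (by omega)
  -- degree bound on lam
  have hlam2 : lam.totalDegree ≤ 2 := by
    by_contra hgt
    push_neg at hgt
    have hlamne : lam ≠ 0 := by
      intro h; rw [h, totalDegree_zero] at hgt; omega
    have hz1 : homogeneousComponent (lam.totalDegree + lam.totalDegree) lam = 0 :=
      homogeneousComponent_eq_zero _ _ (by omega)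
    have hz0 : homogeneousComponent (lam.totalDegree + lam.totalDegree)
        (C q0 : MvPolynomial (Fin 2) k) = 0 :=
      homogeneousComponent_eq_zero _ _ (by rw [totalDegree_C]; omega)
    have hzR : homogeneousComponent (lam.totalDegree + lam.totalDegree)
        ((X 0 - X 1 : MvPolynomial (Fin 2) k)^2
          * (X 0^2 + X 0*X 1 + X 1^2 + C a₂*(X 0 + X 1) + C a₁)) = 0 :=
      homogeneousComponent_eq_zero _ _ (by omega)
    have h1 := congrArg (homogeneousComponent (lam.totalDegree + lam.totalDegree)) hmain
    rw [map_add, map_add, homogeneousComponent_C_mul, homogeneousComponent_C_mul,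
      sq lam, hc_mul le_rfl le_rfl, hz1, hz0, hzR,
      mul_zero, add_zero, add_zero] at h1
    rcases mul_eq_zero.mp h1 with h | h
    · exact hq2 (by simpa using h)
    · rcases mul_eq_zero.mp h with h' | h' <;> exact top_ne hlamne h'
  -- expand lam
  have hE := expand2 hlam2
  set c00 := coeff (Finsupp.single 0 0 + Finsupp.single 1 0) lam with hc00
  set c10 := coeff (Finsupp.single 0 1 + Finsupp.single 1 0) lam with hc10
  set c01 := coeff (Finsupp.single 0 0 + Finsupp.single 1 1) lam with hc01
  set c20 := coeff (Finsupp.single 0 2 + Finsupp.single 1 0) lam with hc20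
  set c11 := coeff (Finsupp.single 0 1 + Finsupp.single 1 1) lam with hc11
  set c02 := coeff (Finsupp.single 0 0 + Finsupp.single 1 2) lam with hc02
  rw [hE] at hmain
  -- the expanded identity
  have hz : (C (q2*c00^2 + q1*c00 + q0) * X 0 ^ 0 * X 1 ^ 0
      + C (2*q2*c10*c00 + q1*c10) * X 0 ^ 1 * X 1 ^ 0
      + C (2*q2*c01*c00 + q1*c01) * X 0 ^ 0 * X 1 ^ 1
      + C (q2*(c10^2 + 2*c20*c00) + q1*c20 - a₁) * X 0 ^ 2 * X 1 ^ 0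
      + C (q2*(2*c10*c01 + 2*c11*c00) + q1*c11 + 2*a₁) * X 0 ^ 1 * X 1 ^ 1
      + C (q2*(c01^2 + 2*c02*c00) + q1*c02 - a₁) * X 0 ^ 0 * X 1 ^ 2
      + C (2*q2*c20*c10 - a₂) * X 0 ^ 3 * X 1 ^ 0
      + C (2*q2*(c20*c01 + c11*c10) + a₂) * X 0 ^ 2 * X 1 ^ 1
      + C (2*q2*(c10*c02 + c11*c01) + a₂) * X 0 ^ 1 * X 1 ^ 2
      + C (2*q2*c02*c01 - a₂) * X 0 ^ 0 * X 1 ^ 3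
      + C (q2*c20^2 - 1) * X 0 ^ 4 * X 1 ^ 0
      + C (2*q2*c20*c11 + 1) * X 0 ^ 3 * X 1 ^ 1
      + C (q2*(c11^2 + 2*c20*c02)) * X 0 ^ 2 * X 1 ^ 2
      + C (2*q2*c11*c02 + 1) * X 0 ^ 1 * X 1 ^ 3
      + C (q2*c02^2 - 1) * X 0 ^ 0 * X 1 ^ 4) = (0 : MvPolynomial (Fin 2) k) := by
    rw [← sub_eq_zero_of_eq hmain]
    simp only [map_add, map_mul, map_sub, map_pow, map_one, map_neg, map_ofNat]
    ring
  have E40 : q2*c20^2 - 1 = 0 := by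
    have h := congrArg (coeff (Finsupp.single 0 4 + Finsupp.single 1 0)) hz
    simp only [coeff_add, coeff_term, coeff_zero] at h
    norm_num at h
    linear_combination h
  have E31 : 2*q2*c20*c11 + 1 = 0 := by
    have h := congrArg (coeff (Finsupp.single 0 3 + Finsupp.single 1 1)) hz
    simp only [coeff_add, coeff_term, coeff_zero] at h
    norm_num at h
    linear_combination h
  have E13 : 2*q2*c11*c02 + 1 = 0 := by
    have h := congrArg (coeff (Finsupp.single 0 1 + Finsupp.single 1 3)) hz
    simp only [coeff_add, coeff_term, coeff_zero] at h
    norm_num at h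
    linear_combination h
  have E30 : 2*q2*c20*c10 - a₂ = 0 := by
    have h := congrArg (coeff (Finsupp.single 0 3 + Finsupp.single 1 0)) hz
    simp only [coeff_add, coeff_term, coeff_zero] at h
    norm_num at h
    linear_combination h
  have E03 : 2*q2*c02*c01 - a₂ = 0 := by
    have h := congrArg (coeff (Finsupp.single 0 0 + Finsupp.single 1 3)) hz
    simp only [coeff_add, coeff_term, coeff_zero] at h
    norm_num at h
    linear_combination h
  have E20 : q2*(c10^2 + 2*c20*c00) + q1*c20 - a₁ = 0 := by
    have h := congrArg (coeff (Finsupp.single 0 2 + Finsupp.single 1 0)) hz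
    simp only [coeff_add, coeff_term, coeff_zero] at h
    norm_num at h
    linear_combination h
  have E11 : q2*(2*c10*c01 + 2*c11*c00) + q1*c11 + 2*a₁ = 0 := by
    have h := congrArg (coeff (Finsupp.single 0 1 + Finsupp.single 1 1)) hz
    simp only [coeff_add, coeff_term, coeff_zero] at h
    norm_num at h
    linear_combination h
  obtain ⟨h10, h01⟩ := sc h3 hq2 E40 E31 E13 E30 E03 E20 E11
  -- conclude
  rw [hE, h10, h01]
  ext m
  rw [coeff_homogeneousComponent]
  split_ifs with hdm
  · have hm : m 0 + m 1 = 1 := by rw [← deg2]; exact hdm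
    rw [rep2 m]
    simp only [coeff_add, coeff_term, map_zero, zero_mul, coeff_zero]
    split_ifs <;> first | omega | simp
  · simp

end Aux

open Polynomial MvPolynomial

/-- Characteristic 3 case: for a monic cubic `f = x³ + a₂x² + a₁x + a₀` over an
algebraically closed field `k` of characteristic 3, if `(x-y)²·f̃(x,y) = Q(λ(x,y))`
for some `Q` of degree 2, then the degree-1 homogeneous component of `λ` vanishes. -/
theorem stmt12 (k : Type*) [Field k] [IsAlgClosed k] [CharP k 3]
    (a₂ a₁ a₀ : k)
    (f : Polynomial k)
    (hf : f = Polynomial.X ^ 3 + Polynomial.C a₂ * Polynomial.X ^ 2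
        + Polynomial.C a₁ * Polynomial.X + Polynomial.C a₀)
    (ft lam : MvPolynomial (Fin 2) k)
    (hft : (MvPolynomial.X 0 - MvPolynomial.X 1) * ft
        = Polynomial.aeval (MvPolynomial.X 0) f - Polynomial.aeval (MvPolynomial.X 1) f)
    (Q : Polynomial k) (hQ : Q.natDegree = 2)
    (heq : (MvPolynomial.X 0 - MvPolynomial.X 1) ^ 2 * ft = Polynomial.aeval lam Q) :
    MvPolynomial.homogeneousComponent 1 lam = 0 := by
  have h3 : (3 : k) = 0 := by exact_mod_cast CharP.cast_eq_zero k 3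
  have hQ0 : Q ≠ 0 := by
    intro h; rw [h] at hQ; simp at hQ
  have hq2 : Q.coeff 2 ≠ 0 := by
    have h2 : Q.leadingCoeff = Q.coeff 2 := by rw [← hQ]; rfl
    rw [← h2]
    exact Polynomial.leadingCoeff_ne_zero.mpr hQ0
  have hDne : (MvPolynomial.X 0 - MvPolynomial.X 1 : MvPolynomial (Fin 2) k) ≠ 0 := by
    intro h
    have h' := congrArg (MvPolynomial.coeff (Finsupp.single 0 1 + Finsupp.single 1 0)) h
    rw [show (MvPolynomial.X 0 - MvPolynomial.X 1 : MvPolynomial (Fin 2) k)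
        = MvPolynomial.C (1:k) * MvPolynomial.X 0 ^ 1 * MvPolynomial.X 1 ^ 0
          + MvPolynomial.C (-1:k) * MvPolynomial.X 0 ^ 0 * MvPolynomial.X 1 ^ 1 by
      simp only [map_neg, map_one]; ring] at h'
    simp only [MvPolynomial.coeff_add, coeff_term, MvPolynomial.coeff_zero] at h'
    norm_num at h'
  have hftE : ft = MvPolynomial.X 0^2 + MvPolynomial.X 0 * MvPolynomial.X 1
      + MvPolynomial.X 1^2 + MvPolynomial.C a₂ * (MvPolynomial.X 0 + MvPolynomial.X 1)
      + MvPolynomial.C a₁ := by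
    apply mul_left_cancel₀ hDne
    rw [hft, hf]
    simp only [map_add, map_mul, map_pow, Polynomial.aeval_X, Polynomial.aeval_C,
      MvPolynomial.algebraMap_eq]
    ring
  have hexp : Polynomial.aeval lam Q
      = MvPolynomial.C (Q.coeff 2) * lam^2 + MvPolynomial.C (Q.coeff 1) * lam
        + MvPolynomial.C (Q.coeff 0) := by
    rw [Polynomial.aeval_eq_sum_range, hQ]
    simp only [Finset.sum_range_succ, Finset.sum_range_zero, zero_add,
      MvPolynomial.smul_eq_C_mul]
    ring
  have hmain : MvPolynomial.C (Q.coeff 2) * lam^2 + MvPolynomial.C (Q.coeff 1) * lam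
      + MvPolynomial.C (Q.coeff 0)
      = (MvPolynomial.X 0 - MvPolynomial.X 1)^2
        * (MvPolynomial.X 0^2 + MvPolynomial.X 0 * MvPolynomial.X 1 + MvPolynomial.X 1^2
          + MvPolynomial.C a₂ * (MvPolynomial.X 0 + MvPolynomial.X 1) + MvPolynomial.C a₁) := by
    rw [← hexp, ← heq, hftE]
  exact main_aux h3 (Q.coeff 0) (Q.coeff 1) (Q.coeff 2) a₂ a₁ hq2 lam hmain
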